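/- Suppose u₀ has no zeros, i.e. there is α₀ > 0 with |u₀(x)| ≥ α₀ for all x ∈ ℝ². Then there exist constants C₀, ε₀ > 0, depending only on u₀, such that for every ε ∈ (0, ε₀) and every solution u of the Ginzburg–Landau heat flow with initial data u₀, one has u(t,x) ≠ 0 for every t ∈ [0, T_ε] (where T_ε = ln(1/ε) − (1/2)·ln ln(1/ε) − C₀) and every x ∈ ℝ². -/

import Mathlib

open MeasureTheory Real Set Filter

noncomputable section

/-- The plane ℝ² with its Euclidean norm. -/
abbrev E2 := EuclideanSpace ℝ (Fin 2)

/-- An integer vector in ℝ². -/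
def intVec (k : Fin 2 → ℤ) : E2 := WithLp.toLp 2 (fun i => (k i : ℝ))

/-- Componentwise Laplacian of a map `f : ℝ² → ℝ²`. -/
def lap (f : E2 → E2) (x : E2) : E2 :=
  ∑ i : Fin 2, fderiv ℝ (fun y => fderiv ℝ f y (EuclideanSpace.single i 1)) x
    (EuclideanSpace.single i 1)

/-- Solution of the Ginzburg-Landau heat flow `∂ₜ u = ε² Δu + (1-|u|²)u`, `u(0,·) = u₀`,
ℤ²-periodic in space, continuous on `[0,∞) × ℝ²`, C² in space and differentiable in time
on `(0,∞) × ℝ²`. -/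
structure IsGLSolution (eps : ℝ) (u0 : E2 → E2) (u : ℝ → E2 → E2) : Prop where
  periodic : ∀ t x k, u t (x + intVec k) = u t x
  cont : ContinuousOn (fun p : ℝ × E2 => u p.1 p.2) (Set.Ici 0 ×ˢ Set.univ)
  space_smooth : ∀ t > (0:ℝ), ContDiff ℝ 2 (u t)
  pde : ∀ t > (0:ℝ), ∀ x, HasDerivAt (fun s => u s x)
    (eps ^ 2 • lap (u t) x + (1 - ‖u t x‖ ^ 2) • u t x) t
  init : ∀ x, u 0 x = u0 x

/-- The unit square `[0,1)²`. -/
def unitBox : Set E2 := {x | ∀ i, x i ∈ Set.Ico (0:ℝ) 1}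


open Topology
open scoped RealInnerProductSpace

section Helpers

/-- at a max over [0,T] attained at t₀ ∈ (0,T], the derivative is ≥ 0 -/
lemma deriv_nonneg_of_max {ψ : ℝ → ℝ} {d t₀ T : ℝ} (h : HasDerivAt ψ d t₀)
    (h0 : 0 < t₀) (hT : t₀ ≤ T) (hmax : ∀ s ∈ Icc (0:ℝ) T, ψ s ≤ ψ t₀) : 0 ≤ d := by
  have hs : Tendsto (slope ψ t₀) (𝓝[<] t₀) (𝓝 d) :=
    (hasDerivAt_iff_tendsto_slope.1 h).mono_left (nhdsWithin_mono _ (by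
      intro x hx; exact ne_of_lt hx))
  refine ge_of_tendsto hs ?_
  filter_upwards [Ioo_mem_nhdsLT_of_mem (show t₀ ∈ Ioc 0 t₀ from ⟨h0, le_refl _⟩)] with s hs'
  have h1 : ψ s ≤ ψ t₀ := hmax s ⟨hs'.1.le, hs'.2.le.trans hT⟩
  have h2 : s - t₀ < 0 := by linarith [hs'.2]
  rw [slope_def_field, div_nonneg_iff]
  right
  exact ⟨by linarith, h2.le⟩

/-- second derivative test at a (global) minimum -/
lemma sdt_min (φ dφ : ℝ → ℝ) (h : ∀ s, HasDerivAt φ (dφ s) s) {d2 : ℝ}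
    (h2 : HasDerivAt dφ d2 0) (hmin : ∀ s, φ 0 ≤ φ s) : 0 ≤ d2 := by
  by_contra hneg
  push_neg at hneg
  have hd0 : dφ 0 = 0 := by
    have : IsLocalMin φ 0 := (isMinOn_univ_iff.2 hmin).isLocalMin (by simp)
    exact this.hasDerivAt_eq_zero (h 0)
  have hs : Tendsto (slope dφ 0) (𝓝[>] 0) (𝓝 d2) :=
    (hasDerivAt_iff_tendsto_slope.1 h2).mono_left (nhdsWithin_mono _ (by
      intro x hx; exact ne_of_gt hx))
  have hev : ∀ᶠ s in 𝓝[>] (0:ℝ), slope dφ 0 s < d2/2 :=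
    hs.eventually (Filter.Tendsto.eventually_lt_const (by linarith) tendsto_id)
  rw [eventually_nhdsWithin_iff] at hev
  obtain ⟨δ, hδ, hball⟩ := Metric.eventually_nhds_iff.1 hev
  have hneg' : ∀ s ∈ Ioo (0:ℝ) δ, dφ s < 0 := by
    intro s hsδ
    have hb : dist s 0 < δ := by
      rw [Real.dist_eq, sub_zero, abs_of_pos hsδ.1]; exact hsδ.2
    have h3 := hball hb hsδ.1
    rw [slope_def_field, hd0, sub_zero, sub_zero] at h3
    have h4 : dφ s < d2/2 * s := (div_lt_iff₀ hsδ.1).1 h3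
    nlinarith [hsδ.1]
  have hanti : StrictAntiOn φ (Icc 0 δ) := by
    apply strictAntiOn_of_deriv_neg (convex_Icc 0 δ)
    · exact fun s _ => ((h s).continuousAt).continuousWithinAt
    · intro s hsi
      rw [interior_Icc] at hsi
      rw [(h s).deriv]
      exact hneg' s hsi
  have := hanti (left_mem_Icc.2 hδ.le) ⟨(half_pos hδ).le, (half_lt_self hδ).le⟩ (half_pos hδ)
  exact absurd (hmin (δ/2)) (by linarith)

lemma sdt_max (φ dφ : ℝ → ℝ) (h : ∀ s, HasDerivAt φ (dφ s) s) {d2 : ℝ}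
    (h2 : HasDerivAt dφ d2 0) (hmax : ∀ s, φ s ≤ φ 0) : d2 ≤ 0 := by
  have := sdt_min (fun s => -φ s) (fun s => -dφ s) (fun s => (h s).neg) h2.neg
    (fun s => by simpa using hmax s)
  linarith

/-- one-sided Lipschitz property of the GL nonlinearity -/
lemma inner_gl_nonlin (a b : E2) :
    ⟪a - b, (1 - ‖a‖^2) • a - (1 - ‖b‖^2) • b⟫ ≤ ‖a - b‖^2 := by
  have hab : ⟪a, b⟫ ≤ ‖a‖ * ‖b‖ := real_inner_le_norm a b
  have h1 : ⟪a - b, (1 - ‖a‖^2) • a - (1 - ‖b‖^2) • b⟫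
      = ⟪a - b, a - b⟫ - (‖a‖^2 * (‖a‖^2 - ⟪a,b⟫) + ‖b‖^2 * (‖b‖^2 - ⟪a,b⟫)) := by
    simp only [inner_sub_left, inner_sub_right, real_inner_smul_right]
    rw [real_inner_self_eq_norm_sq, real_inner_self_eq_norm_sq, real_inner_comm b a]
    ring
  rw [h1, real_inner_self_eq_norm_sq]
  nlinarith [norm_nonneg a, norm_nonneg b, sq_nonneg (‖a‖ - ‖b‖), sq_nonneg (‖a‖ + ‖b‖)]

/-- decompose a point of the plane into box + integer vector -/
lemma e2_decomp (x : E2) : ∃ (y : E2) (k : Fin 2 → ℤ),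
    x = y + intVec k ∧ ∀ i, y i ∈ Icc (0:ℝ) 1 := by
  refine ⟨WithLp.toLp 2 (fun i => Int.fract (x i)), fun i => ⌊x i⌋, ?_, ?_⟩
  · ext i
    show x i = Int.fract (x i) + (⌊x i⌋ : ℝ)
    rw [Int.fract]; ring
  · intro i
    exact ⟨(Int.fract_nonneg _), (Int.fract_lt_one _).le⟩

def box : Set E2 := {x | ∀ i, x i ∈ Icc (0:ℝ) 1}

lemma isCompact_box : IsCompact box := by
  have hcl : IsClosed box := by
    have : box = ⋂ i, (fun x : E2 => x i) ⁻¹' Icc (0:ℝ) 1 := by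
      ext x; simp [box, Set.mem_iInter]
    rw [this]
    exact isClosed_iInter fun i => isClosed_Icc.preimage (by fun_prop)
  have hsub : box ⊆ Metric.closedBall 0 2 := by
    intro x hx
    rw [Metric.mem_closedBall, dist_zero_right]
    have : ‖x‖ ≤ Real.sqrt 4 := by
      rw [EuclideanSpace.norm_eq]
      apply Real.sqrt_le_sqrt
      have : ∀ i, ‖x i‖^2 ≤ 1 := by
        intro i
        have := hx i
        rw [Real.norm_eq_abs, sq_abs]
        nlinarith [this.1, this.2]
      calc (∑ i, ‖x i‖^2) ≤ ∑ i : Fin 2, 1 := Finset.sum_le_sum fun i _ => this i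
        _ ≤ 4 := by norm_num
    simpa [show Real.sqrt 4 = 2 by
      rw [show (4:ℝ) = 2^2 by norm_num, Real.sqrt_sq]; norm_num] using this
  exact (isCompact_closedBall 0 2).of_isClosed_subset hcl hsub

/-- existence of a maximum for a continuous space-periodic function on [0,T]×ℝ² -/
lemma exists_max_periodic {T : ℝ} (hT : 0 ≤ T) (V : ℝ → E2 → ℝ)
    (hV : ContinuousOn (fun p : ℝ × E2 => V p.1 p.2) (Icc 0 T ×ˢ univ))
    (hper : ∀ t x k, V t (x + intVec k) = V t x) :
    ∃ t₀ ∈ Icc (0:ℝ) T, ∃ x₀, ∀ t ∈ Icc (0:ℝ) T, ∀ x, V t x ≤ V t₀ x₀ := by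
  have hK : IsCompact (Icc (0:ℝ) T ×ˢ box) := (isCompact_Icc).prod isCompact_box
  have hne : (Icc (0:ℝ) T ×ˢ box).Nonempty := ⟨(0, 0), by
    constructor
    · exact left_mem_Icc.2 hT
    · intro i; exact ⟨le_refl _, zero_le_one⟩⟩
  obtain ⟨⟨t₀, x₀⟩, hmem, hmax⟩ := hK.exists_isMaxOn hne
    (hV.mono (Set.prod_mono le_rfl (subset_univ _)))
  refine ⟨t₀, hmem.1, x₀, ?_⟩
  intro t ht x
  obtain ⟨y, k, hxy, hy⟩ := e2_decomp x
  have : V t x = V t y := by rw [hxy, hper]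
  rw [this]
  exact hmax (Set.mk_mem_prod ht hy)

lemma hasDerivAt_line {g : E2 → E2} (hg : ContDiff ℝ 1 g) (x v : E2) (s : ℝ) :
    HasDerivAt (fun s : ℝ => g (x + s • v)) (fderiv ℝ g (x + s • v) v) s := by
  have hline : HasDerivAt (fun s : ℝ => x + s • v) v s := by
    simpa using ((hasDerivAt_id s).smul_const v).const_add x
  have hgd : HasFDerivAt g (fderiv ℝ g (x + s • v)) (x + s • v) :=
    (hg.differentiable one_ne_zero).differentiableAt.hasFDerivAt
  exact hgd.comp_hasDerivAt s hline

lemma contDiff_dline {g : E2 → E2} (hg : ContDiff ℝ 2 g) (v : E2) :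
    ContDiff ℝ 1 (fun y => fderiv ℝ g y v) := by
  exact (hg.fderiv_right (by norm_num)).clm_apply contDiff_const

lemma hasDerivAt_line2 {g : E2 → E2} (hg : ContDiff ℝ 2 g) (x v : E2) (s : ℝ) :
    HasDerivAt (fun s : ℝ => fderiv ℝ g (x + s • v) v)
      (fderiv ℝ (fun y => fderiv ℝ g y v) (x + s • v) v) s :=
  hasDerivAt_line (contDiff_dline hg v) x v s

/-- second derivative test for ‖g‖² at a spatial minimum, summed over directions:
⟪g x₀, lap g x₀⟫ ≥ -∑ ‖∂ᵢ g x₀‖² -/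
lemma inner_lap_ge_at_min {g : E2 → E2} (hg : ContDiff ℝ 2 g) (x₀ : E2)
    (hmin : ∀ x, ‖g x₀‖^2 ≤ ‖g x‖^2) :
    -(∑ i : Fin 2, ‖fderiv ℝ g x₀ (EuclideanSpace.single i 1)‖^2) ≤ ⟪g x₀, lap g x₀⟫ := by
  have key : ∀ i : Fin 2,
      -‖fderiv ℝ g x₀ (EuclideanSpace.single i 1)‖^2
        ≤ ⟪g x₀, fderiv ℝ (fun y => fderiv ℝ g y (EuclideanSpace.single i 1)) x₀
            (EuclideanSpace.single i 1)⟫ := by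
    intro i
    set v := EuclideanSpace.single i (1:ℝ) with hv
    set c : ℝ → E2 := fun s => g (x₀ + s • v) with hc
    set c' : ℝ → E2 := fun s => fderiv ℝ g (x₀ + s • v) v with hc'
    have hcd : ∀ s, HasDerivAt c (c' s) s := fun s => hasDerivAt_line (hg.of_le (by norm_num)) x₀ v s
    have hcd2 : HasDerivAt c' (fderiv ℝ (fun y => fderiv ℝ g y v) x₀ v) 0 := by
      have := hasDerivAt_line2 hg x₀ v 0
      simpa using this
    -- φ s = ⟪c s, c s⟫
    set φ : ℝ → ℝ := fun s => ⟪c s, c s⟫ with hφ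
    have hφd : ∀ s, HasDerivAt φ (2 * ⟪c s, c' s⟫) s := by
      intro s
      have := (hcd s).inner ℝ (hcd s)
      refine this.congr_deriv ?_
      rw [real_inner_comm (c' s) (c s)]; ring
    have hφd2 : HasDerivAt (fun s => 2 * ⟪c s, c' s⟫)
        (2 * (⟪c' 0, c' 0⟫ + ⟪c 0, fderiv ℝ (fun y => fderiv ℝ g y v) x₀ v⟫)) 0 := by
      have := ((hcd 0).inner ℝ hcd2).const_mul 2
      refine this.congr_deriv ?_
      ring
    have hmin' : ∀ s, φ 0 ≤ φ s := by
      intro s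
      simp only [hφ, real_inner_self_eq_norm_sq]
      have h0 : c 0 = g x₀ := by simp [hc]
      rw [h0]
      exact hmin _
    have := sdt_min φ (fun s => 2 * ⟪c s, c' s⟫) hφd hφd2 hmin'
    have hc0 : c 0 = g x₀ := by simp [hc]
    have hc'0 : c' 0 = fderiv ℝ g x₀ v := by simp [hc']
    rw [hc0, hc'0] at this
    rw [real_inner_self_eq_norm_sq] at this
    linarith
  calc -(∑ i : Fin 2, ‖fderiv ℝ g x₀ (EuclideanSpace.single i 1)‖^2)
      = ∑ i : Fin 2, -‖fderiv ℝ g x₀ (EuclideanSpace.single i 1)‖^2 := by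
        rw [Finset.sum_neg_distrib]
    _ ≤ ∑ i : Fin 2, ⟪g x₀, fderiv ℝ (fun y => fderiv ℝ g y (EuclideanSpace.single i 1)) x₀
            (EuclideanSpace.single i 1)⟫ := Finset.sum_le_sum fun i _ => key i
    _ = ⟪g x₀, lap g x₀⟫ := by rw [lap, inner_sum]

lemma fderiv_shift {g : E2 → E2} (hg : Differentiable ℝ g) (h x : E2) :
    fderiv ℝ (fun y => g (y + h)) x = fderiv ℝ g (x + h) := by
  have h1 : HasFDerivAt g (fderiv ℝ g (x + h)) (x + h) := (hg _).hasFDerivAt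
  have h2 : HasFDerivAt (fun y : E2 => y + h) (ContinuousLinearMap.id ℝ E2) x :=
    (hasFDerivAt_id x).add_const h
  have h3 := h1.comp x h2
  exact h3.fderiv

lemma lap_sub {f g : E2 → E2} (hf : ContDiff ℝ 2 f) (hg : ContDiff ℝ 2 g) (x : E2) :
    lap (fun y => f y - g y) x = lap f x - lap g x := by
  unfold lap
  rw [← Finset.sum_sub_distrib]
  apply Finset.sum_congr rfl
  intro i _
  set v := EuclideanSpace.single i (1:ℝ)
  have hfun : (fun y => fderiv ℝ (fun z => f z - g z) y v)
      = fun y => fderiv ℝ f y v - fderiv ℝ g y v := by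
    funext y
    rw [fderiv_fun_sub (hf.differentiable (by norm_num) y) (hg.differentiable (by norm_num) y)]
    rfl
  rw [hfun, fderiv_fun_sub ((contDiff_dline hf v).differentiable one_ne_zero x)
    ((contDiff_dline hg v).differentiable one_ne_zero x)]
  rfl

lemma lap_shift {g : E2 → E2} (hg : ContDiff ℝ 2 g) (h x : E2) :
    lap (fun y => g (y + h)) x = lap g (x + h) := by
  unfold lap
  apply Finset.sum_congr rfl
  intro i _
  set v := EuclideanSpace.single i (1:ℝ)
  have hfun : (fun y => fderiv ℝ (fun z => g (z + h)) y v)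
      = fun y => (fun w => fderiv ℝ g w v) (y + h) := by
    funext y
    rw [fderiv_shift (hg.differentiable (by norm_num)) h y]
  rw [hfun, fderiv_shift ((contDiff_dline hg v).differentiable one_ne_zero) h x]

lemma inner_lap_le_at_max {g : E2 → E2} (hg : ContDiff ℝ 2 g) (x₀ : E2)
    (hmax : ∀ x, ‖g x‖^2 ≤ ‖g x₀‖^2) :
    ⟪g x₀, lap g x₀⟫ ≤ -(∑ i : Fin 2, ‖fderiv ℝ g x₀ (EuclideanSpace.single i 1)‖^2) := by
  have key : ∀ i : Fin 2,
      ⟪g x₀, fderiv ℝ (fun y => fderiv ℝ g y (EuclideanSpace.single i 1)) x₀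
            (EuclideanSpace.single i 1)⟫
        ≤ -‖fderiv ℝ g x₀ (EuclideanSpace.single i 1)‖^2 := by
    intro i
    set v := EuclideanSpace.single i (1:ℝ) with hv
    set c : ℝ → E2 := fun s => g (x₀ + s • v) with hc
    set c' : ℝ → E2 := fun s => fderiv ℝ g (x₀ + s • v) v with hc'
    have hcd : ∀ s, HasDerivAt c (c' s) s := fun s => hasDerivAt_line (hg.of_le (by norm_num)) x₀ v s
    have hcd2 : HasDerivAt c' (fderiv ℝ (fun y => fderiv ℝ g y v) x₀ v) 0 := by
      have := hasDerivAt_line2 hg x₀ v 0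
      simpa using this
    set φ : ℝ → ℝ := fun s => ⟪c s, c s⟫ with hφ
    have hφd : ∀ s, HasDerivAt φ (2 * ⟪c s, c' s⟫) s := by
      intro s
      have := (hcd s).inner ℝ (hcd s)
      refine this.congr_deriv ?_
      rw [real_inner_comm (c' s) (c s)]; ring
    have hφd2 : HasDerivAt (fun s => 2 * ⟪c s, c' s⟫)
        (2 * (⟪c' 0, c' 0⟫ + ⟪c 0, fderiv ℝ (fun y => fderiv ℝ g y v) x₀ v⟫)) 0 := by
      have := ((hcd 0).inner ℝ hcd2).const_mul 2
      refine this.congr_deriv ?_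
      ring
    have hmax' : ∀ s, φ s ≤ φ 0 := by
      intro s
      simp only [hφ, real_inner_self_eq_norm_sq]
      have h0 : c 0 = g x₀ := by simp [hc]
      rw [h0]
      exact hmax _
    have := sdt_max φ (fun s => 2 * ⟪c s, c' s⟫) hφd hφd2 hmax'
    have hc0 : c 0 = g x₀ := by simp [hc]
    have hc'0 : c' 0 = fderiv ℝ g x₀ v := by simp [hc']
    rw [hc0, hc'0] at this
    rw [real_inner_self_eq_norm_sq] at this
    linarith
  calc ⟪g x₀, lap g x₀⟫
      = ∑ i : Fin 2, ⟪g x₀, fderiv ℝ (fun y => fderiv ℝ g y (EuclideanSpace.single i 1)) x₀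
            (EuclideanSpace.single i 1)⟫ := by rw [lap, inner_sum]
    _ ≤ ∑ i : Fin 2, -‖fderiv ℝ g x₀ (EuclideanSpace.single i 1)‖^2 :=
        Finset.sum_le_sum fun i _ => key i
    _ = -(∑ i : Fin 2, ‖fderiv ℝ g x₀ (EuclideanSpace.single i 1)‖^2) := by
        rw [Finset.sum_neg_distrib]



/-- Goal A: Lipschitz propagation with loss e^{(1+δ)t} -/
lemma lipschitz_propagation_del
    {eps : ℝ} {u0 : E2 → E2} {u : ℝ → E2 → E2} (sol : IsGLSolution eps u0 u)
    {K : ℝ} (hK : ∀ a b : E2, ‖u0 a - u0 b‖ ≤ K * ‖a - b‖)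
    {T : ℝ} (hT : 0 ≤ T) (h : E2) {δ : ℝ} (hδ : 0 < δ) :
    ∀ t ∈ Icc (0:ℝ) T, ∀ x : E2,
      ‖u t (x + h) - u t x‖^2 ≤ (K * ‖h‖)^2 * exp (2*(1+δ)*t) := by
  set W : ℝ → E2 → ℝ := fun t x =>
    ‖u t (x + h) - u t x‖^2 * exp (-(2*(1+δ))*t) with hW
  -- continuity
  have hcW : ContinuousOn (fun p : ℝ × E2 => W p.1 p.2) (Icc 0 T ×ˢ univ) := by
    have hsub : (Icc (0:ℝ) T ×ˢ (univ : Set E2)) ⊆ Ici 0 ×ˢ univ :=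
      Set.prod_mono Icc_subset_Ici_self le_rfl
    have c1 : ContinuousOn (fun p : ℝ × E2 => u p.1 (p.2 + h)) (Icc 0 T ×ˢ univ) := by
      have hmap : Continuous (fun p : ℝ × E2 => ((p.1, p.2 + h) : ℝ × E2)) := by continuity
      refine (sol.cont.comp hmap.continuousOn ?_)
      intro p hp
      exact ⟨hsub hp |>.1, trivial⟩
    have c2 : ContinuousOn (fun p : ℝ × E2 => u p.1 p.2) (Icc 0 T ×ˢ univ) :=
      sol.cont.mono hsub
    have c3 : ContinuousOn (fun p : ℝ × E2 => ‖u p.1 (p.2 + h) - u p.1 p.2‖^2)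
        (Icc 0 T ×ˢ univ) := ((c1.sub c2).norm.pow 2)
    exact c3.mul ((Real.continuous_exp.comp (continuous_const.mul continuous_fst)).continuousOn)
  -- periodicity
  have hperW : ∀ t x k, W t (x + intVec k) = W t x := by
    intro t x k
    have e1 : x + intVec k + h = x + h + intVec k := by abel
    simp only [hW, e1, sol.periodic]
  obtain ⟨t₀, ht₀, x₀, hmax⟩ := exists_max_periodic hT W hcW hperW
  -- the max value is at most (K‖h‖)²
  have hbound : W t₀ x₀ ≤ (K * ‖h‖)^2 := by
    rcases eq_or_lt_of_le ht₀.1 with h0 | h0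
    · -- t₀ = 0
      rw [hW]
      simp only [← h0, mul_zero, Real.exp_zero, mul_one, sol.init]
      have := hK (x₀ + h) x₀
      simp only [add_sub_cancel_left] at this
      nlinarith [norm_nonneg (u0 (x₀ + h) - u0 x₀), norm_nonneg h,
        mul_nonneg (norm_nonneg (0:E2)) (norm_nonneg h)]
    · -- t₀ > 0 : max value is 0
      set a := u t₀ (x₀ + h) with ha
      set b := u t₀ x₀ with hb
      set w₀ : E2 := a - b with hw₀
      set E : ℝ → ℝ := fun t => exp (-(2*(1+δ))*t) with hE
      have hEpos : 0 < E t₀ := Real.exp_pos _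
      -- spatial max of ‖F‖² at x₀
      set F : E2 → E2 := fun y => u t₀ (y + h) - u t₀ y with hF
      have hsm := sol.space_smooth t₀ h0
      have hFsmooth : ContDiff ℝ 2 F := by
        exact (hsm.comp (contDiff_id.add contDiff_const)).sub hsm
      have hFmax : ∀ x, ‖F x‖^2 ≤ ‖F x₀‖^2 := by
        intro x
        have := hmax t₀ ht₀ x
        rw [hW] at this
        exact le_of_mul_le_mul_right this hEpos
      have hlapF : lap F x₀ = lap (u t₀) (x₀ + h) - lap (u t₀) x₀ := by
        have := lap_sub (f := fun y => u t₀ (y + h)) (g := u t₀)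
          (hsm.comp (contDiff_id.add contDiff_const)) hsm x₀
        rw [hF, this, lap_shift hsm h x₀]
      have hS : ⟪w₀, lap (u t₀) (x₀ + h) - lap (u t₀) x₀⟫ ≤ 0 := by
        have h1 := inner_lap_le_at_max hFsmooth x₀ hFmax
        have h2 : F x₀ = w₀ := rfl
        rw [h2, hlapF] at h1
        refine h1.trans ?_
        simp only [neg_nonpos]
        positivity
      -- time derivative at t₀
      set A : E2 := eps^2 • lap (u t₀) (x₀ + h) + (1 - ‖a‖^2) • a with hA
      set B : E2 := eps^2 • lap (u t₀) x₀ + (1 - ‖b‖^2) • b with hB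
      have hwD : HasDerivAt (fun s => u s (x₀ + h) - u s x₀) (A - B) t₀ :=
        (sol.pde t₀ h0 (x₀ + h)).sub (sol.pde t₀ h0 x₀)
      have hnD : HasDerivAt (fun s => ⟪u s (x₀ + h) - u s x₀, u s (x₀ + h) - u s x₀⟫)
          (⟪w₀, A - B⟫ + ⟪A - B, w₀⟫) t₀ := hwD.inner ℝ hwD
      have hED : HasDerivAt E (E t₀ * (-(2*(1+δ)))) t₀ := by
        have := ((hasDerivAt_id t₀).const_mul (-(2*(1+δ)))).exp
        simpa [hE, mul_comm] using this
      have hψD : HasDerivAt (fun s => ⟪u s (x₀ + h) - u s x₀, u s (x₀ + h) - u s x₀⟫ * E s)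
          ((⟪w₀, A - B⟫ + ⟪A - B, w₀⟫) * E t₀ + ⟪w₀, w₀⟫ * (E t₀ * (-(2*(1+δ))))) t₀ :=
        hnD.mul hED
      have hψmax : ∀ s ∈ Icc (0:ℝ) T,
          (fun s => ⟪u s (x₀ + h) - u s x₀, u s (x₀ + h) - u s x₀⟫ * E s) s
          ≤ (fun s => ⟪u s (x₀ + h) - u s x₀, u s (x₀ + h) - u s x₀⟫ * E s) t₀ := by
        intro s hs
        have hws := hmax s hs x₀
        rw [hW] at hws
        show (⟪u s (x₀ + h) - u s x₀, u s (x₀ + h) - u s x₀⟫:ℝ) * E s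
          ≤ (⟪u t₀ (x₀ + h) - u t₀ x₀, u t₀ (x₀ + h) - u t₀ x₀⟫:ℝ) * E t₀
        rw [real_inner_self_eq_norm_sq, real_inner_self_eq_norm_sq]
        exact hws
      have hD := deriv_nonneg_of_max hψD h0 ht₀.2 hψmax
      -- estimate the derivative
      have hAB : ⟪w₀, A - B⟫ ≤ ‖w₀‖^2 := by
        have hsplit : A - B = eps^2 • (lap (u t₀) (x₀ + h) - lap (u t₀) x₀)
            + ((1 - ‖a‖^2) • a - (1 - ‖b‖^2) • b) := by
          rw [hA, hB, smul_sub]; abel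
        rw [hsplit, inner_add_right, real_inner_smul_right]
        have h2 := inner_gl_nonlin a b
        nlinarith [sq_nonneg eps]
      have hw0 : ‖w₀‖^2 ≤ 0 := by
        have hsym : ⟪A - B, w₀⟫ = ⟪w₀, A - B⟫ := real_inner_comm _ _
        rw [hsym, real_inner_self_eq_norm_sq] at hD
        nlinarith [mul_le_mul_of_nonneg_right hAB hEpos.le, mul_pos hδ hEpos]
      have hw00 : ‖w₀‖^2 = 0 := le_antisymm hw0 (by positivity)
      have hWval : W t₀ x₀ = ‖w₀‖^2 * E t₀ := rfl
      rw [hWval, hw00, zero_mul]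
      positivity
  -- conclude
  intro t ht x
  have h1 : ‖u t (x + h) - u t x‖^2 * exp (-(2*(1+δ))*t) ≤ (K * ‖h‖)^2 :=
    (hmax t ht x).trans hbound
  have h2 : (0:ℝ) < exp (-(2*(1+δ))*t) := Real.exp_pos _
  have h3 : exp (2*(1+δ)*t) = (exp (-(2*(1+δ))*t))⁻¹ := by
    rw [← Real.exp_neg]; ring_nf
  rw [h3, ← div_eq_mul_inv]
  exact (le_div_iff₀ h2).2 h1

lemma le_of_sq_le_sq' {a b : ℝ} (ha : 0 ≤ a) (hb : 0 ≤ b) (h : a^2 ≤ b^2) : a ≤ b := by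
  nlinarith

/-- Goal A final form -/
lemma lipschitz_propagation
    {eps : ℝ} {u0 : E2 → E2} {u : ℝ → E2 → E2} (sol : IsGLSolution eps u0 u)
    {K : ℝ} (hK0 : 0 ≤ K) (hK : ∀ a b : E2, ‖u0 a - u0 b‖ ≤ K * ‖a - b‖)
    {T : ℝ} (hT : 0 ≤ T) :
    ∀ t ∈ Icc (0:ℝ) T, ∀ x h : E2,
      ‖u t (x + h) - u t x‖ ≤ K * ‖h‖ * exp t := by
  intro t ht x h
  have hsq : ‖u t (x + h) - u t x‖^2 ≤ (K * ‖h‖)^2 * exp (2*t) := by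
    have htend : Tendsto (fun δ : ℝ => (K * ‖h‖)^2 * exp (2*(1+δ)*t)) (𝓝[>] 0)
        (𝓝 ((K * ‖h‖)^2 * exp (2*(1+0)*t))) := by
      apply Tendsto.mono_left _ nhdsWithin_le_nhds
      exact (Continuous.tendsto (by continuity) 0)
    rw [show (2*(1+(0:ℝ))*t) = 2*t by ring] at htend
    refine ge_of_tendsto htend ?_
    filter_upwards [self_mem_nhdsWithin] with δ hδ
    exact lipschitz_propagation_del sol hK hT h hδ t ht x
  have h1 : K * ‖h‖ * exp t = ((K * ‖h‖) * exp t) := rfl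
  apply le_of_sq_le_sq' (norm_nonneg _) (by positivity)
  calc ‖u t (x + h) - u t x‖^2 ≤ (K * ‖h‖)^2 * exp (2*t) := hsq
    _ = (K * ‖h‖ * exp t)^2 := by
        have : exp (2*t) = exp t * exp t := by
          rw [← Real.exp_add]; ring_nf
        rw [this]; ring
  
/-- directional derivative bound from a Lipschitz-type bound -/
lemma dirderiv_bound {f : E2 → E2} (hf : ContDiff ℝ 1 f) {L : ℝ}
    (hL : ∀ x h : E2, ‖f (x + h) - f x‖ ≤ L * ‖h‖) (x v : E2) :
    ‖fderiv ℝ f x v‖ ≤ L * ‖v‖ := by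
  have hd := hasDerivAt_line hf x v 0
  rw [show x + (0:ℝ) • v = x by simp] at hd
  have hslope := hasDerivAt_iff_tendsto_slope.1 hd
  have hnorm : Tendsto (fun s => ‖slope (fun s : ℝ => f (x + s • v)) 0 s‖) (𝓝[≠] 0)
      (𝓝 ‖fderiv ℝ f x v‖) := hslope.norm
  refine le_of_tendsto hnorm ?_
  filter_upwards [self_mem_nhdsWithin] with s hs
  have hs0 : s ≠ 0 := hs
  rw [slope_def_module]
  rw [show (0:ℝ) • v = (0:E2) by simp, add_zero, sub_zero]
  rw [norm_smul, norm_inv, Real.norm_eq_abs]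
  have := hL x (s • v)
  rw [norm_smul, Real.norm_eq_abs] at this
  calc |s|⁻¹ * ‖f (x + s • v) - f x‖ ≤ |s|⁻¹ * (L * (|s| * ‖v‖)) := by
        apply mul_le_mul_of_nonneg_left this (by positivity)
    _ = L * ‖v‖ := by
        field_simp

/-- Goal B: lower bound on the modulus -/
lemma modulus_lower
    {eps : ℝ} {u0 : E2 → E2} {u : ℝ → E2 → E2} (sol : IsGLSolution eps u0 u)
    {K : ℝ} (hK0 : 0 ≤ K) (hK : ∀ a b : E2, ‖u0 a - u0 b‖ ≤ K * ‖a - b‖)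
    {α : ℝ} (hα0 : 0 < α) (hα1 : α ≤ 1) (hαlow : ∀ x, α ≤ ‖u0 x‖)
    {T : ℝ} (hT : 0 ≤ T) :
    ∀ t ∈ Icc (0:ℝ) T, ∀ x : E2,
      α^2 - 2*K^2*eps^2*exp (2*T) ≤ ‖u t x‖^2 := by
  have key : ∀ δ > (0:ℝ), ∀ t ∈ Icc (0:ℝ) T, ∀ x : E2,
      (α^2 - 2*K^2*eps^2*(exp (2*t) - 1) - δ*(1+t)) - ‖u t x‖^2 < 0 := by
    intro δ hδ
    set G : ℝ → ℝ := fun t => α^2 - 2*K^2*eps^2*(exp (2*t) - 1) - δ*(1+t) with hG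
    set V : ℝ → E2 → ℝ := fun t x => G t - ‖u t x‖^2 with hV
    have hcV : ContinuousOn (fun p : ℝ × E2 => V p.1 p.2) (Icc 0 T ×ˢ univ) := by
      have hsub : (Icc (0:ℝ) T ×ˢ (univ : Set E2)) ⊆ Ici 0 ×ˢ univ :=
        Set.prod_mono Icc_subset_Ici_self le_rfl
      have cG0 : Continuous G := by
        rw [hG]
        exact (continuous_const.sub (continuous_const.mul
          ((Real.continuous_exp.comp (continuous_const.mul continuous_id)).sub
            continuous_const))).sub (continuous_const.mul
              (continuous_const.add continuous_id))
      exact ((cG0.comp continuous_fst).continuousOn).sub ((sol.cont.mono hsub).norm.pow 2)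
    have hperV : ∀ t x k, V t (x + intVec k) = V t x := by
      intro t x k; simp only [hV, sol.periodic]
    obtain ⟨t₀, ht₀, x₀, hmax⟩ := exists_max_periodic hT V hcV hperV
    have hneg : V t₀ x₀ < 0 := by
      rcases eq_or_lt_of_le ht₀.1 with h0 | h0
      · have : V t₀ x₀ = α^2 - δ - ‖u0 x₀‖^2 := by
          simp only [hV, hG, ← h0, sol.init, mul_zero, Real.exp_zero]
          ring
        rw [this]
        have h1 := hαlow x₀
        nlinarith [hαlow x₀, hα0.le, norm_nonneg (u0 x₀)]
      · -- t₀ > 0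
        by_contra hcon
        push_neg at hcon
        set b : E2 := u t₀ x₀ with hb
        set σ₀ : ℝ := ‖b‖^2 with hσ
        have hsm := sol.space_smooth t₀ h0
        have hσle : σ₀ ≤ G t₀ := by
          have : 0 ≤ G t₀ - σ₀ := hcon
          linarith
        have hGle : G t₀ ≤ 1 := by
          have hGval : G t₀ = α^2 - 2*K^2*eps^2*(exp (2*t₀) - 1) - δ*(1+t₀) := rfl
          rw [hGval]
          have h1 : (0:ℝ) ≤ 2*K^2*eps^2*(exp (2*t₀) - 1) := by
            have h2 : (1:ℝ) ≤ exp (2*t₀) := Real.one_le_exp (by nlinarith [ht₀.1])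
            exact mul_nonneg (by positivity) (by linarith)
          nlinarith [hδ, ht₀.1, hα1, hα0.le]
        have hσ0 : 0 ≤ σ₀ := by positivity
        have hσ1 : σ₀ ≤ 1 := hσle.trans hGle
        -- spatial min of ‖u t₀ ·‖² at x₀
        have hmin : ∀ x, ‖u t₀ x₀‖^2 ≤ ‖u t₀ x‖^2 := by
          intro x
          have := hmax t₀ ht₀ x
          simp only [hV] at this
          linarith
        -- gradient bound at time t₀
        have hgrad : ∀ i : Fin 2, ‖fderiv ℝ (u t₀) x₀ (EuclideanSpace.single i 1)‖
            ≤ K * exp t₀ := by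
          intro i
          have hlip : ∀ x h : E2, ‖u t₀ (x + h) - u t₀ x‖ ≤ (K * exp t₀) * ‖h‖ := by
            intro x h
            have := lipschitz_propagation sol hK0 hK hT t₀ ht₀ x h
            calc ‖u t₀ (x + h) - u t₀ x‖ ≤ K * ‖h‖ * exp t₀ := this
              _ = (K * exp t₀) * ‖h‖ := by ring
          have := dirderiv_bound (hsm.of_le (by norm_num)) hlip x₀
            (EuclideanSpace.single i 1)
          rw [EuclideanSpace.norm_single] at this
          simpa using this
        have hlapb : -(2*(K * exp t₀)^2) ≤ ⟪b, lap (u t₀) x₀⟫ := by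
          have h1 := inner_lap_ge_at_min hsm x₀ hmin
          refine le_trans ?_ h1
          have h2 : ∑ i : Fin 2, ‖fderiv ℝ (u t₀) x₀ (EuclideanSpace.single i 1)‖^2
              ≤ 2*(K * exp t₀)^2 := by
            have : ∀ i : Fin 2, ‖fderiv ℝ (u t₀) x₀ (EuclideanSpace.single i 1)‖^2
                ≤ (K * exp t₀)^2 := fun i => by
              have := hgrad i
              nlinarith [norm_nonneg (fderiv ℝ (u t₀) x₀ (EuclideanSpace.single i 1))]
            calc (∑ i : Fin 2, ‖fderiv ℝ (u t₀) x₀ (EuclideanSpace.single i 1)‖^2)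
                ≤ ∑ _i : Fin 2, (K * exp t₀)^2 := Finset.sum_le_sum fun i _ => this i
              _ = 2*(K * exp t₀)^2 := by
                  simp only [Finset.sum_const, Finset.card_univ, Fintype.card_fin,
                    nsmul_eq_mul]
                  norm_num
          linarith
        -- time derivative
        set D : E2 := eps^2 • lap (u t₀) x₀ + (1 - ‖b‖^2) • b with hD
        have hbD : HasDerivAt (fun s => u s x₀) D t₀ := sol.pde t₀ h0 x₀
        have hGd : HasDerivAt G (-(4*K^2*eps^2*exp (2*t₀)) - δ) t₀ := by
          rw [hG]
          have h1 : HasDerivAt (fun t : ℝ => exp (2*t)) (2*exp (2*t₀)) t₀ := by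
            have := ((hasDerivAt_id t₀).const_mul (2:ℝ)).exp
            simpa [mul_comm] using this
          have h2 := ((hasDerivAt_const t₀ (α^2)).sub
              (((h1.sub_const 1).const_mul (2*K^2*eps^2)))).sub
              (((hasDerivAt_const t₀ (1:ℝ)).add (hasDerivAt_id t₀)).const_mul δ)
          refine h2.congr_deriv ?_
          ring
        have hψd : HasDerivAt (fun s => G s - ⟪u s x₀, u s x₀⟫)
            ((-(4*K^2*eps^2*exp (2*t₀)) - δ) - (⟪b, D⟫ + ⟪D, b⟫)) t₀ :=
          hGd.sub (hbD.inner ℝ hbD)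
        have hψmax : ∀ s ∈ Icc (0:ℝ) T, (fun s => G s - ⟪u s x₀, u s x₀⟫) s
            ≤ (fun s => G s - ⟪u s x₀, u s x₀⟫) t₀ := by
          intro s hs
          have := hmax s hs x₀
          simp only [hV] at this
          show G s - ⟪u s x₀, u s x₀⟫ ≤ G t₀ - ⟪u t₀ x₀, u t₀ x₀⟫
          rw [real_inner_self_eq_norm_sq, real_inner_self_eq_norm_sq]
          exact this
        have hpos := deriv_nonneg_of_max hψd h0 ht₀.2 hψmax
        -- contradiction
        have hbDval : -(2*eps^2*(K * exp t₀)^2) ≤ ⟪b, D⟫ := by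
          rw [hD, inner_add_right, real_inner_smul_right, real_inner_smul_right,
            real_inner_self_eq_norm_sq]
          have h1 : 0 ≤ (1 - ‖b‖^2) * ‖b‖^2 := by
            rw [← hσ]; nlinarith
          nlinarith [hlapb, sq_nonneg eps]
        have hsym : ⟪D, b⟫ = ⟪b, D⟫ := real_inner_comm _ _
        rw [hsym] at hpos
        have hexp2 : (K * exp t₀)^2 = K^2 * exp (2*t₀) := by
          have : exp (2*t₀) = exp t₀ * exp t₀ := by rw [← Real.exp_add]; ring_nf
          rw [this]; ring
        rw [hexp2] at hbDval
        nlinarith [hδ]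
    intro t ht x
    have := hmax t ht x
    have h2 := lt_of_le_of_lt this hneg
    simpa [hV] using h2
  -- take δ → 0
  intro t ht x
  have hlim : Tendsto (fun δ : ℝ => (α^2 - 2*K^2*eps^2*(exp (2*t) - 1) - δ*(1+t)))
      (𝓝[>] 0) (𝓝 (α^2 - 2*K^2*eps^2*(exp (2*t) - 1) - 0*(1+t))) := by
    apply Tendsto.mono_left _ nhdsWithin_le_nhds
    exact Continuous.tendsto (continuous_const.sub (continuous_id.mul continuous_const)) 0
  rw [zero_mul, sub_zero] at hlim
  have hle : α^2 - 2*K^2*eps^2*(exp (2*t) - 1) ≤ ‖u t x‖^2 := by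
    refine le_of_tendsto hlim ?_
    filter_upwards [self_mem_nhdsWithin] with δ hδ
    have := key δ hδ t ht x
    linarith
  have hmono : exp (2*t) - 1 ≤ exp (2*T) := by
    have := Real.exp_le_exp.2 (show 2*t ≤ 2*T by linarith [ht.2])
    linarith
  have hc : (0:ℝ) ≤ 2*K^2*eps^2 := by positivity
  have := mul_le_mul_of_nonneg_left hmono hc
  linarith

end Helpers

/-- Corollary: no zeros are created: if `u₀` has no zeros (uniformly),
then for small `ε` the solution has no zeros up to time
`T_ε = ln(1/ε) - (1/2) ln ln(1/ε) - C₀`. -/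
theorem no_zeros_created (u0 : E2 → E2) (hu0 : ContDiff ℝ 1 u0)
    (hu0per : ∀ x k, u0 (x + intVec k) = u0 x)
    (hnozero : ∃ α0 > (0:ℝ), ∀ x, α0 ≤ ‖u0 x‖) :
    ∃ C0 > (0:ℝ), ∃ ε0 > (0:ℝ), ∀ ε ∈ Set.Ioo (0:ℝ) ε0,
      ∀ u : ℝ → E2 → E2, IsGLSolution ε u0 u →
        ∀ t ∈ Set.Icc (0:ℝ)
          (Real.log (1/ε) - (1/2) * Real.log (Real.log (1/ε)) - C0),
          ∀ x : E2, u t x ≠ 0 := by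
  obtain ⟨α0, hα0pos, hα0low⟩ := hnozero
  -- the Lipschitz constant of u0
  have hdiff : Differentiable ℝ u0 := hu0.differentiable one_ne_zero
  have hfc : Continuous fun x => ‖fderiv ℝ u0 x‖ := (hu0.continuous_fderiv one_ne_zero).norm
  have hbox0 : (0:E2) ∈ box := fun i => ⟨le_refl _, zero_le_one⟩
  obtain ⟨z, hz, hzmax⟩ := isCompact_box.exists_isMaxOn ⟨0, hbox0⟩ hfc.continuousOn
  set K := ‖fderiv ℝ u0 z‖ with hKdef
  have hK0 : 0 ≤ K := norm_nonneg _
  have hfper : ∀ (x : E2) (k : Fin 2 → ℤ), fderiv ℝ u0 (x + intVec k) = fderiv ℝ u0 x := by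
    intro x k
    have h1 : (fun y => u0 (y + intVec k)) = u0 := funext fun y => hu0per y k
    have h2 := fderiv_shift hdiff (intVec k) x
    rw [h1] at h2
    exact h2.symm
  have hKbound : ∀ x, ‖fderiv ℝ u0 x‖ ≤ K := by
    intro x
    obtain ⟨y, k, hxy, hy⟩ := e2_decomp x
    rw [hxy, hfper]
    exact hzmax hy
  have hK : ∀ a b : E2, ‖u0 a - u0 b‖ ≤ K * ‖a - b‖ := by
    intro a b
    exact Convex.norm_image_sub_le_of_norm_fderiv_le
      (fun x _ => hdiff x) (fun x _ => hKbound x) convex_univ trivial trivial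
  -- normalize α
  set α := min α0 1 with hαdef
  have hα0 : 0 < α := lt_min hα0pos one_pos
  have hα1 : α ≤ 1 := min_le_right _ _
  have hαlow : ∀ x, α ≤ ‖u0 x‖ := fun x => (min_le_left _ _).trans (hα0low x)
  -- choose the constants
  refine ⟨1 + (2*K^2 + 1)/α^2, by positivity, exp (-1), Real.exp_pos _, ?_⟩
  set C0 := 1 + (2*K^2 + 1)/α^2 with hC0def
  intro ε hε u sol t ht x
  set L := Real.log (1/ε) with hLdef
  set T := L - (1/2) * Real.log L - C0 with hTdef
  have hεpos : 0 < ε := hε.1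
  have hL1 : 1 < L := by
    rw [hLdef, one_div, Real.log_inv]
    have := Real.log_lt_log hεpos hε.2
    rw [Real.log_exp] at this
    linarith
  have hT0 : 0 ≤ T := le_trans ht.1 ht.2
  -- the key smallness: ε² e^{2T} = e^{-2C0}/L
  have hQ : ε^2 * exp (2*T) = L⁻¹ * exp (-(2*C0)) := by
    have hεe : exp (Real.log ε) = ε := Real.exp_log hεpos
    have hLε : Real.log ε = -L := by
      rw [hLdef, one_div, Real.log_inv]; ring
    have h1 : ε^2 = exp (Real.log ε + Real.log ε) := by
      rw [Real.exp_add, hεe]; ring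
    have h2 : exp (2*T) = exp (2*L - Real.log L - 2*C0) := by
      rw [hTdef]; ring_nf
    rw [h1, h2, ← Real.exp_add, hLε]
    have h3 : -L + -L + (2*L - Real.log L - 2*C0) = -Real.log L + -(2*C0) := by ring
    rw [h3, Real.exp_add, Real.exp_neg, Real.exp_log (by linarith : (0:ℝ) < L)]
  have hQle : ε^2 * exp (2*T) ≤ exp (-(2*C0)) := by
    rw [hQ]
    have h4 : L⁻¹ ≤ 1 := by
      rw [inv_le_one_iff₀]; right; linarith
    nlinarith [Real.exp_pos (-(2*C0)), h4, inv_pos.2 (show (0:ℝ) < L by linarith)]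
  -- 2K² e^{-2C0} < α²
  have hsmall : 2*K^2 * exp (-(2*C0)) < α^2 := by
    have hPpos : (0:ℝ) < exp (2*C0) := Real.exp_pos _
    have hmul : α^2 * ((2*K^2+1)/α^2) = 2*K^2+1 := by field_simp
    have hexpC : 2*C0 + 1 ≤ exp (2*C0) := Real.add_one_le_exp (2*C0)
    have hα2 : (0:ℝ) < α^2 := pow_pos hα0 2
    have hup : α^2*(2*C0+1) ≤ α^2*exp (2*C0) := mul_le_mul_of_nonneg_left hexpC hα2.le
    have hval : α^2*(2*C0+1) = 3*α^2 + 2*(2*K^2+1) := by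
      rw [hC0def]
      field_simp
      ring
    have h2 : 2*K^2 < α^2 * exp (2*C0) := by nlinarith [sq_nonneg K]
    rw [Real.exp_neg]
    calc 2*K^2 * (exp (2*C0))⁻¹ < (α^2 * exp (2*C0)) * (exp (2*C0))⁻¹ := by
          apply mul_lt_mul_of_pos_right h2 (inv_pos.2 hPpos)
      _ = α^2 := by field_simp
  -- conclude
  have hlow := modulus_lower sol hK0 hK hα0 hα1 hαlow hT0 t ht x
  have hfinal : 0 < ‖u t x‖^2 := by
    have h5 : 2*K^2*ε^2*exp (2*T) ≤ 2*K^2 * exp (-(2*C0)) := by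
      have := mul_le_mul_of_nonneg_left hQle (by positivity : (0:ℝ) ≤ 2*K^2)
      calc 2*K^2*ε^2*exp (2*T) = 2*K^2*(ε^2*exp (2*T)) := by ring
        _ ≤ 2*K^2 * exp (-(2*C0)) := this
    nlinarith
  intro hzero
  rw [hzero] at hfinal
  simp at hfinal
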